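/- With the notation of the previous statement (Q₃ positive definite on symmetric matrices, Q₂^{in} the constrained minimum, d(F'') the unique minimizer), suppose G ∈ ℝ^{3×3} is symmetric with Tr G = 0, E = L₃(G) satisfies E₁₃ = E₂₃ = 0, and suppose Q₂^{in}(G'') = Q₃(G). Then the minimizer satisfies d(G'') = (G₁₃, G₂₃, G₃₃/2), i.e., the tangential part of the minimizer equals the off-plane entries (G₁₃, G₂₃) of G. -/

import Mathlib

open Matrix

/-- The 3×3 matrix `F'' + d⊗e₃ + e₃⊗d`. -/
noncomputable def emb (F : Matrix (Fin 2) (Fin 2) ℝ) (d : Fin 3 → ℝ) :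
    Matrix (Fin 3) (Fin 3) ℝ :=
  Matrix.of fun i j =>
    if hi : (i : ℕ) < 2 then
      if _hj : (j : ℕ) < 2 then F ⟨i, hi⟩ ⟨j, _hj⟩ else d i
    else if hj : (j : ℕ) < 2 then d j else 2 * d 2

/-- The principal 2×2 minor of a 3×3 matrix. -/
noncomputable def pminor (A : Matrix (Fin 3) (Fin 3) ℝ) : Matrix (Fin 2) (Fin 2) ℝ :=
  Matrix.of fun i j => A i.castSucc j.castSucc

/-- The Frobenius inner product `⟨A : B⟩ = Tr(AᵀB)` on 3×3 matrices. -/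
noncomputable def minner₃ (A B : Matrix (Fin 3) (Fin 3) ℝ) : ℝ := (Aᵀ * B).trace

/-- **Identification of the minimizer (formula (4.4)).** Let `Q₃` be a quadratic form,
positive semidefinite, positive definite on symmetric matrices, depending only on the
symmetric part. Let `G` be symmetric with `Tr G = 0`, let `E = L₃(G)` satisfy
`E₁₃ = E₂₃ = 0`, and suppose `Q₂ⁱⁿ(G'') = Q₃(G)`, i.e. the constrained minimum for `G''`
is attained with value `Q₃(G)` at the minimizer `d`. Then `d = (G₁₃, G₂₃, G₃₃/2)`. -/
theorem minimizer_identification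
    (Q₃ : Matrix (Fin 3) (Fin 3) ℝ → ℝ)
    (B₃ : Matrix (Fin 3) (Fin 3) ℝ →ₗ[ℝ] Matrix (Fin 3) (Fin 3) ℝ →ₗ[ℝ] ℝ)
    (hB₃symm : ∀ F₁ F₂, B₃ F₁ F₂ = B₃ F₂ F₁)
    (hQ₃ : ∀ F, Q₃ F = B₃ F F)
    (hpsd : ∀ F, 0 ≤ Q₃ F)
    (hpd : ∀ F : Matrix (Fin 3) (Fin 3) ℝ, F.IsSymm → F ≠ 0 → 0 < Q₃ F)
    (hsym : ∀ F : Matrix (Fin 3) (Fin 3) ℝ, Q₃ F = Q₃ ((1/2 : ℝ) • (F + Fᵀ)))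
    (G E : Matrix (Fin 3) (Fin 3) ℝ)
    (hGsymm : G.IsSymm) (hGtr : G.trace = 0)
    (hLG : ∀ F : Matrix (Fin 3) (Fin 3) ℝ, (Q₃ (G + F) - Q₃ (G - F)) / 4 = minner₃ E F)
    (hE13 : E 0 2 = 0) (hE23 : E 1 2 = 0)
    (d : Fin 3 → ℝ)
    (hconstr : (emb (pminor G) d).trace = 0)
    (hmin : ∀ d' : Fin 3 → ℝ, (emb (pminor G) d').trace = 0 →
      Q₃ (emb (pminor G) d) ≤ Q₃ (emb (pminor G) d'))
    (hval : Q₃ (emb (pminor G) d) = Q₃ G) :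
    d = ![G 0 2, G 1 2, G 2 2 / 2] := by
  set F := pminor G with hF
  set d₀ : Fin 3 → ℝ := ![G 0 2, G 1 2, G 2 2 / 2] with hd₀
  have hGs : ∀ i j, G j i = G i j := fun i j => by
    have := congrFun (congrFun hGsymm i) j
    simpa [Matrix.transpose_apply] using this
  have hembG : emb F d₀ = G := by
    ext i j
    fin_cases i <;> fin_cases j <;>
      simp [emb, pminor, hd₀, hF, Matrix.of_apply] <;>
      first
        | rfl
        | exact (hGs _ _).symm
        | exact hGs _ _
        | ring
  set dm : Fin 3 → ℝ := fun i => (d i + d₀ i) / 2 with hdm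
  have hZ : emb F dm = (1/2 : ℝ) • (emb F d + emb F d₀) := by
    ext i j
    fin_cases i <;> fin_cases j <;>
      simp [emb, Matrix.add_apply, Matrix.smul_apply, hdm, smul_eq_mul] <;> ring
  have htrd₀ : (emb F d₀).trace = 0 := by rw [hembG]; exact hGtr
  have htrm : (emb F dm).trace = 0 := by
    rw [hZ, Matrix.trace_smul, Matrix.trace_add, hconstr, htrd₀]
    simp
  have hle := hmin dm htrm
  set X := emb F d with hX
  set Y := G with hY
  have hQY : Q₃ (emb F d₀) = Q₃ Y := by rw [hembG]
  have hexp1 : Q₃ (emb F dm) =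
      (B₃ X X + 2 * B₃ X Y + B₃ Y Y) / 4 := by
    rw [hQ₃, hZ, hembG]
    simp only [map_add, _root_.map_smul, LinearMap.add_apply, LinearMap.smul_apply, smul_eq_mul]
    rw [hB₃symm Y X]; ring
  have hexp2 : Q₃ (X - Y) = B₃ X X - 2 * B₃ X Y + B₃ Y Y := by
    rw [hQ₃]
    simp only [map_sub, LinearMap.sub_apply]
    rw [hB₃symm Y X]; ring
  have hQX : Q₃ X = B₃ X X := hQ₃ X
  have hQY' : Q₃ Y = B₃ Y Y := hQ₃ Y
  have hXYle : Q₃ (X - Y) ≤ 0 := by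
    have hv : Q₃ X = Q₃ Y := hval
    rw [hexp2]
    rw [hexp1] at hle
    rw [hQX] at hv hle
    rw [hQY'] at hv
    linarith
  have hXsymm : X.IsSymm := by
    ext i j
    fin_cases i <;> fin_cases j <;>
      simp [hX, emb, hF, pminor, Matrix.transpose_apply, Matrix.of_apply] <;>
      first
        | exact hGs _ _
        | exact (hGs _ _).symm
  have hXYsymm : (X - Y).IsSymm := hXsymm.sub hGsymm
  have hXY0 : X - Y = 0 := by
    by_contra h
    exact absurd hXYle (not_le.2 (hpd _ hXYsymm h))
  have hXY : X = Y := sub_eq_zero.mp hXY0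
  funext i
  fin_cases i
  · have := congrFun (congrFun hXY 0) 2
    simpa [hX, emb, hY, hd₀] using this
  · have := congrFun (congrFun hXY 1) 2
    simpa [hX, emb, hY, hd₀] using this
  · have := congrFun (congrFun hXY 2) 2
    simp [hX, emb, hY] at this
    simp [hd₀]
    linarith
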